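/- Let p be a prime and R a commutative ring that is a flat ℤ/p²ℤ-algebra, and set A = R/pR. Then the assignment x ↦ 1 + p·x̃ (where x̃ ∈ R is any lift of x ∈ A) is a well-defined injective group homomorphism q from the additive group of A to the group of units R^×, and the image of q is exactly the kernel of the natural group homomorphism R^× → A^× induced by reduction modulo p. Equivalently, the sequence 0 → A → R^× → A^× is exact with first map q. -/
import Mathlib

open TensorProduct

private lemma flat_key (p : ℕ) [Fact p.Prime] (R : Type) [CommRing R]
    [Algebra (ZMod (p ^ 2)) R] [Module.Flat (ZMod (p ^ 2)) R]
    (x : R) (hx : (p : R) * x = 0) : ∃ y : R, (p : R) * y = x := by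
  have hp : 0 < p := (Fact.out : p.Prime).pos
  have hsmul : ∀ y : R, (p : ZMod (p ^ 2)) • y = (p : R) * y := fun y => by
    rw [Algebra.smul_def, map_natCast]
  set ℓ : ZMod (p ^ 2) →ₗ[ZMod (p ^ 2)] ZMod (p ^ 2) :=
    LinearMap.lsmul (ZMod (p ^ 2)) (ZMod (p ^ 2)) (p : ZMod (p ^ 2)) with hℓ
  have hℓapp : ∀ a : ZMod (p ^ 2), ℓ a = (p : ZMod (p ^ 2)) * a := fun a => rfl
  have hexact : Function.Exact ℓ ℓ := by
    intro a
    constructor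
    · intro h
      have h2 : ((p * a.val : ℕ) : ZMod (p ^ 2)) = 0 := by
        rw [Nat.cast_mul, a.natCast_zmod_val, ← hℓapp, h]
      have hdvd : p ^ 2 ∣ p * a.val := (ZMod.natCast_eq_zero_iff _ _).mp h2
      have hdvd2 : p * p ∣ p * a.val := by rw [← pow_two]; exact hdvd
      have hdvd' : p ∣ a.val := (Nat.mul_dvd_mul_iff_left hp).mp hdvd2
      refine ⟨((a.val / p : ℕ) : ZMod (p ^ 2)), ?_⟩
      rw [hℓapp, ← Nat.cast_mul]
      rw [Nat.mul_div_cancel' hdvd', a.natCast_zmod_val]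
    · rintro ⟨b, rfl⟩
      rw [hℓapp, hℓapp, ← mul_assoc, ← Nat.cast_mul, ← pow_two, ZMod.natCast_self, zero_mul]
  have hex := Module.Flat.rTensor_exact (R := ZMod (p ^ 2)) R hexact
  have hlid : ∀ t : (ZMod (p ^ 2)) ⊗[ZMod (p ^ 2)] R,
      TensorProduct.lid (ZMod (p ^ 2)) R (ℓ.rTensor R t)
        = (p : ZMod (p ^ 2)) • TensorProduct.lid (ZMod (p ^ 2)) R t := by
    intro t
    induction t using TensorProduct.induction_on with
    | zero => simp
    | tmul s y => simp [hℓapp, mul_smul]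
    | add a b ha hb => simp [map_add, ha, hb, smul_add]
  have h1 : ℓ.rTensor R ((1 : ZMod (p ^ 2)) ⊗ₜ[ZMod (p ^ 2)] x) = 0 := by
    rw [LinearMap.rTensor_tmul, hℓapp, mul_one]
    calc (p : ZMod (p ^ 2)) ⊗ₜ[ZMod (p ^ 2)] x
        = ((p : ZMod (p ^ 2)) • (1 : ZMod (p ^ 2))) ⊗ₜ[ZMod (p ^ 2)] x := by
          rw [smul_eq_mul, mul_one]
      _ = (1 : ZMod (p ^ 2)) ⊗ₜ[ZMod (p ^ 2)] ((p : ZMod (p ^ 2)) • x) :=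
          TensorProduct.smul_tmul _ _ _
      _ = 0 := by rw [hsmul, hx, TensorProduct.tmul_zero]
  obtain ⟨t, ht⟩ := (hex _).mp h1
  refine ⟨TensorProduct.lid (ZMod (p ^ 2)) R t, ?_⟩
  rw [← hsmul, ← hlid, ht]
  simp

theorem exists_exp_p_hom_of_flat
    (p : ℕ) [Fact p.Prime] (R : Type) [CommRing R] [Algebra (ZMod (p ^ 2)) R]
    [Module.Flat (ZMod (p ^ 2)) R] :
    ∃ q : (R ⧸ Ideal.span {(p : R)}) →+ Additive Rˣ,
      (∀ x : R,
        ((Additive.toMul (q (Ideal.Quotient.mk (Ideal.span {(p : R)}) x)) : Rˣ) : R)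
          = 1 + (p : R) * x) ∧
      Function.Injective q ∧
      (∀ u : Rˣ, Additive.ofMul u ∈ AddMonoidHom.range q ↔
        Units.map (Ideal.Quotient.mk (Ideal.span {(p : R)})).toMonoidHom u = 1) := by
  set I := Ideal.span {(p : R)} with hI
  have hp2 : (p : R) * (p : R) = 0 := by
    have h : ((p ^ 2 : ℕ) : R) = 0 := by
      rw [← map_natCast (algebraMap (ZMod (p ^ 2)) R) (p ^ 2), ZMod.natCast_self, map_zero]
    rw [Nat.cast_pow, pow_two] at h
    exact h
  -- the unit 1 + p x
  set u : R → Rˣ := fun x =>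
    ⟨1 + (p : R) * x, 1 - (p : R) * x,
      by linear_combination (-(x * x)) * hp2, by linear_combination (-(x * x)) * hp2⟩
    with hu
  have humul : ∀ x y : R, u (x + y) = u x * u y := by
    intro x y
    ext
    show 1 + (p : R) * (x + y) = (1 + (p : R) * x) * (1 + (p : R) * y)
    linear_combination (-(x * y)) * hp2
  have hu0 : u 0 = 1 := by
    ext; show 1 + (p : R) * 0 = 1; ring
  -- the hom on R
  set f : R →+ Additive Rˣ :=
    { toFun := fun x => Additive.ofMul (u x)
      map_zero' := by simp [hu0]
      map_add' := fun x y => by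
        simp only [humul, ofMul_mul] }
    with hf
  have hwd : ∀ a b : R, (Submodule.quotientRel I) a b → f a = f b := by
    intro a b hab
    rw [Submodule.quotientRel_def] at hab
    rw [hI, Ideal.mem_span_singleton'] at hab
    obtain ⟨c, hc⟩ := hab
    have : u a = u b := by
      ext
      show 1 + (p : R) * a = 1 + (p : R) * b
      have : (p : R) * (a - b) = 0 := by
        rw [← hc, ← mul_assoc, mul_comm (p : R) c, mul_assoc, hp2, mul_zero]
      linear_combination this
    simp [hf, this]
  set qfun : (R ⧸ I) → Additive Rˣ := fun a => Quotient.liftOn' a f hwd with hqfun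
  have hqmk : ∀ x : R, qfun (Ideal.Quotient.mk I x) = f x := fun x => rfl
  have hsurj : Function.Surjective (Ideal.Quotient.mk I) := Ideal.Quotient.mk_surjective
  set q : (R ⧸ I) →+ Additive Rˣ :=
    { toFun := qfun
      map_zero' := by
        have : (0 : R ⧸ I) = Ideal.Quotient.mk I 0 := (map_zero _).symm
        rw [this, hqmk, map_zero]
      map_add' := by
        intro a b
        obtain ⟨x, rfl⟩ := hsurj a
        obtain ⟨y, rfl⟩ := hsurj b
        show qfun (Ideal.Quotient.mk I x + Ideal.Quotient.mk I y) = f x + f y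
        rw [← map_add, hqmk, map_add] }
    with hq
  have hqval : ∀ x : R,
      ((Additive.toMul (q (Ideal.Quotient.mk I x)) : Rˣ) : R) = 1 + (p : R) * x :=
    fun x => rfl
  refine ⟨q, hqval, ?_, ?_⟩
  · -- injectivity
    intro a b hab
    obtain ⟨x, rfl⟩ := hsurj a
    obtain ⟨y, rfl⟩ := hsurj b
    have h1 : u x = u y := by
      have := congrArg (fun t => (Additive.toMul t : Rˣ)) hab
      exact this
    have h2 : 1 + (p : R) * x = 1 + (p : R) * y := congrArg Units.val h1
    have h3 : (p : R) * (x - y) = 0 := by linear_combination h2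
    obtain ⟨z, hz⟩ := flat_key p R (x - y) h3
    rw [Ideal.Quotient.mk_eq_mk_iff_sub_mem, hI, Ideal.mem_span_singleton']
    exact ⟨z, by rw [mul_comm]; exact hz⟩
  · -- range = kernel
    intro v
    constructor
    · rintro ⟨a, ha⟩
      obtain ⟨x, rfl⟩ := hsurj a
      have hv : v = u x := by
        have := congrArg (fun t => (Additive.toMul t : Rˣ)) ha
        exact this.symm
      ext
      show (Ideal.Quotient.mk I) ((v : Rˣ) : R) = 1
      rw [hv]
      show (Ideal.Quotient.mk I) (1 + (p : R) * x) = 1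
      have hpmem : (p : R) ∈ I := by rw [hI]; exact Ideal.subset_span rfl
      rw [map_add, map_one, map_mul, Ideal.Quotient.eq_zero_iff_mem.mpr hpmem, zero_mul,
        add_zero]
    · intro hv
      have hv1 : (Ideal.Quotient.mk I) ((v : Rˣ) : R) = 1 := congrArg Units.val hv
      have hv2 : ((v : Rˣ) : R) - 1 ∈ I := by
        rw [← Ideal.Quotient.eq]
        rw [hv1, map_one]
      rw [hI, Ideal.mem_span_singleton'] at hv2
      obtain ⟨c, hc⟩ := hv2
      refine ⟨Ideal.Quotient.mk I c, ?_⟩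
      have : u c = v := by
        ext
        show 1 + (p : R) * c = ((v : Rˣ) : R)
        rw [mul_comm]
        linear_combination hc
      show Additive.ofMul (u c) = Additive.ofMul v
      rw [this]
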